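/- Assume f₁(x) = ∑_{m≥0} b_m x^m converges on [−1,1] and there exist constants 0 < r < 1 and 0 < c₂ ≤ c₁ with c₂ r^m ≤ b_m ≤ c₁ r^m for all m ≥ 0. Then for every integer α ≥ 1, the series defining λ_{m,α} converges for every m ≥ 0, and there exist constants C_{1,α}, C_{2,α} > 0, depending only on α, d, r, c₁, c₂, such that for all m ≥ 0: C_{2,α} (r/4)^m ≤ λ_{m,α} ≤ C_{1,α} (m+1)^{α−1} r^m. -/

import Mathlib

open scoped BigOperators

/-- `powCoef b α m` is the `m`-th Taylor coefficient at `0` of `f₁^α`, where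
`f₁(x) = ∑_{m≥0} b m * x^m`; it is given by the `α`-fold Cauchy product of the series. -/
def powCoef (b : ℕ → ℝ) (α m : ℕ) : ℝ :=
  ∑ t ∈ Finset.Nat.antidiagonalTuple α m, ∏ i, b (t i)

/-- The surface area of the unit sphere `S^{d-1} ⊆ ℝ^d`, i.e. `2 π^{d/2} / Γ(d/2)`. -/
noncomputable def unitSphereArea (d : ℕ) : ℝ :=
  2 * Real.pi ^ ((d : ℝ) / 2) / Real.Gamma ((d : ℝ) / 2)

/-- The eigenvalue `λ_{k,α}` associated with the dot-product kernel `f₁^α` on `S^{d-1}`: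
`λ_{k,α} = (|S^{d-2}| Γ((d-1)/2) / 2^{k+1}) ∑_{s≥0} b_{2s+k,α} ((2s+k)!/(2s)!)
Γ(s+1/2)/Γ(s+k+d/2)`. -/
noncomputable def lamCoef (d : ℕ) (b : ℕ → ℝ) (k α : ℕ) : ℝ :=
  unitSphereArea (d - 1) * Real.Gamma (((d : ℝ) - 1) / 2) / 2 ^ (k + 1) *
    ∑' s : ℕ, powCoef b α (2 * s + k) *
      (((2 * s + k).factorial : ℝ) / ((2 * s).factorial : ℝ)) *
      (Real.Gamma ((s : ℝ) + 1 / 2) / Real.Gamma ((s : ℝ) + (k : ℝ) + (d : ℝ) / 2))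

open Real in
lemma myGamma_two : Real.Gamma 2 = 1 := by
  have := Real.Gamma_add_one (s := 1) one_ne_zero
  norm_num [Real.Gamma_one] at this
  convert this using 2
  norm_num

open Real in
lemma gamma_ge_one {x : ℝ} (hx : 2 ≤ x) : 1 ≤ Real.Gamma x := by
  rcases eq_or_lt_of_le hx with h | h
  · rw [← h, myGamma_two]
  · have := Real.Gamma_strictMonoOn_Ici (Set.self_mem_Ici) (Set.mem_Ici.2 hx) h
    rw [myGamma_two] at this; linarith

open Real in
lemma gamma_mono {x y : ℝ} (hx : 2 ≤ x) (hxy : x ≤ y) : Real.Gamma x ≤ Real.Gamma y :=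
  Real.Gamma_strictMonoOn_Ici.monotoneOn (Set.mem_Ici.2 hx) (Set.mem_Ici.2 (hx.trans hxy)) hxy

open Real in
lemma gamma_ge_half {x : ℝ} (hx : 1 ≤ x) : 1/2 ≤ Real.Gamma x := by
  rcases le_total 2 x with h | h
  · linarith [gamma_ge_one h]
  · have hpos : (0:ℝ) < x := by linarith
    have h1 : Real.Gamma (x + 1) = x * Real.Gamma x := Real.Gamma_add_one hpos.ne'
    have h2 : 1 ≤ Real.Gamma (x + 1) := gamma_ge_one (by linarith)
    nlinarith [Real.Gamma_pos_of_pos hpos]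

open Real in
lemma gamma_le_max {a b x : ℝ} (ha : 0 < a) (hax : a ≤ x) (hxb : x ≤ b) :
    Real.Gamma x ≤ max (Real.Gamma a) (Real.Gamma b) := by
  have hb : 0 < b := lt_of_lt_of_le ha (hax.trans hxb)
  have := Real.convexOn_Gamma.le_on_segment (Set.mem_Ioi.2 ha) (Set.mem_Ioi.2 hb)
    (x := a) (y := b) (z := x) ?_
  · exact this
  · rw [segment_eq_Icc (hax.trans hxb)]; exact ⟨hax, hxb⟩

open Real in
lemma claimA {z y : ℝ} (hz : 1 ≤ z) (hzy : z ≤ y) : Real.Gamma z ≤ 2 * Real.Gamma y := by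
  rcases le_total 2 z with h | h
  · have := gamma_mono h hzy
    have := Real.Gamma_pos_of_pos (show (0:ℝ) < z by linarith)
    linarith
  · have h1 : Real.Gamma z ≤ 1 := by
      have := gamma_le_max (a := 1) (b := 2) one_pos hz h
      rwa [Real.Gamma_one, myGamma_two, max_self] at this
    have h2 : 1/2 ≤ Real.Gamma y := gamma_ge_half (hz.trans hzy)
    linarith

open Real in
lemma claimA' {z y : ℝ} (hz : 1/2 ≤ z) (hzy : z ≤ y) (hy : 1 ≤ y) :
    Real.Gamma z ≤ 2 * Real.sqrt π * Real.Gamma y := by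
  have hsp : 1 ≤ Real.sqrt π := by
    rw [show (1:ℝ) = Real.sqrt 1 by simp]
    exact Real.sqrt_le_sqrt (by linarith [Real.pi_gt_three])
  rcases le_total 2 z with h | h
  · have h1 := gamma_mono h hzy
    have h2 := Real.Gamma_pos_of_pos (show (0:ℝ) < z by linarith)
    nlinarith
  · have h1 : Real.Gamma z ≤ Real.sqrt π := by
      have := gamma_le_max (a := 1/2) (b := 2) (by norm_num) hz h
      rw [Real.Gamma_one_half_eq, myGamma_two] at this
      exact this.trans (max_le le_rfl hsp)
    have h2 : 1/2 ≤ Real.Gamma y := gamma_ge_half hy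
    nlinarith

open Real in
lemma dup (u : ℝ) (n : ℕ) (hn : 2 * u = (n : ℝ) + 1) :
    Real.Gamma u * Real.Gamma (u + 1/2) = (n.factorial : ℝ) / 2 ^ n * Real.sqrt π := by
  have h := Real.Gamma_mul_Gamma_add_half u
  rw [hn, Real.Gamma_nat_eq_factorial] at h
  rw [h, show (1 - ((n:ℝ)+1)) = -(n:ℝ) by ring, Real.rpow_neg (by norm_num),
    Real.rpow_natCast]
  ring

open Real in
/-- Legendre duplication applied to factorial ratio. -/
lemma factRatio (s k : ℕ) :
    ((2*s+k).factorial : ℝ) * (Real.Gamma ((s:ℝ) + 1/2) * Real.Gamma ((s:ℝ) + 1)) =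
      2 ^ k * ((2*s).factorial : ℝ) *
        (Real.Gamma ((s:ℝ) + ((k:ℝ)+1)/2) * Real.Gamma ((s:ℝ) + ((k:ℝ)+1)/2 + 1/2)) := by
  have h1 := dup ((s:ℝ) + ((k:ℝ)+1)/2) (2*s+k) (by push_cast; ring)
  have h2 := dup ((s:ℝ) + 1/2) (2*s) (by push_cast; ring)
  have e2 : Real.Gamma ((s:ℝ) + 1/2) * Real.Gamma ((s:ℝ) + 1) =
      ((2*s).factorial : ℝ) / 2 ^ (2*s) * Real.sqrt π := by
    rw [← h2, show (s:ℝ) + 1/2 + 1/2 = (s:ℝ) + 1 by ring]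
  rw [e2, h1]
  have hp : (0:ℝ) < 2 ^ (2*s) := by positivity
  have hpk : (0:ℝ) < 2 ^ (2*s+k) := by positivity
  have hkk : (2:ℝ) ^ (2*s+k) = 2 ^ (2*s) * 2 ^ k := by rw [pow_add]
  field_simp [hkk]
  ring

open Real in
/-- `Γ(s+p) Γ(s+q) ≤ Γ(s+1) Γ(s+(p+q-1))` for `s ≥ 0`, `p q ≥ 1` naturals. -/
lemma prodGamma (s : ℝ) (hs : 0 ≤ s) : ∀ q : ℕ, 1 ≤ q → ∀ p : ℕ, 1 ≤ p →
    Real.Gamma (s + p) * Real.Gamma (s + q) ≤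
      Real.Gamma (s + 1) * Real.Gamma (s + (p + q - 1 : ℕ)) := by
  intro q
  induction q with
  | zero => omega
  | succ q ih =>
    intro _ p hp
    rcases Nat.eq_zero_or_pos q with h | hq1
    · subst h
      rw [show p + 1 - 1 = p from rfl]
      apply le_of_eq
      norm_num
      ring
    · have ihp := ih hq1 p hp
      have hq1' : (1:ℝ) ≤ (q:ℝ) := by exact_mod_cast hq1
      have hp' : (1:ℝ) ≤ (p:ℝ) := by exact_mod_cast hp
      have hcast1 : ((p + q - 1 : ℕ) : ℝ) = (p:ℝ) + q - 1 := by
        push_cast [Nat.cast_sub (by omega : 1 ≤ p + q)]; ring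
      have hrec : Real.Gamma (s + ((q:ℕ)+1)) = (s + q) * Real.Gamma (s + q) := by
        rw [show s + (((q:ℕ):ℝ)+1) = (s + q) + 1 by ring]
        exact Real.Gamma_add_one (by linarith)
      have hrec2 : Real.Gamma (s + (p + (q+1) - 1 : ℕ)) =
          (s + ((p + q - 1 : ℕ) : ℝ)) * Real.Gamma (s + (p + q - 1 : ℕ)) := by
        have : (p + (q+1) - 1 : ℕ) = (p + q - 1) + 1 := by omega
        rw [this, show s + (((p + q - 1 : ℕ) + 1 : ℕ) : ℝ) = (s + ((p+q-1:ℕ):ℝ)) + 1 by push_cast; ring]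
        exact Real.Gamma_add_one (by rw [hcast1]; linarith)
      push_cast only [Nat.cast_add, Nat.cast_one] at hrec ⊢
      rw [hrec, hrec2]
      have hpos1 : 0 < Real.Gamma (s + p) := Real.Gamma_pos_of_pos (by linarith)
      have hpos2 : 0 < Real.Gamma (s + q) := Real.Gamma_pos_of_pos (by linarith)
      have hpos3 : 0 < Real.Gamma (s + 1) := Real.Gamma_pos_of_pos (by linarith)
      have hpos4 : 0 < Real.Gamma (s + ((p + q - 1 : ℕ):ℝ)) :=
        Real.Gamma_pos_of_pos (by rw [hcast1]; linarith)
      have hcoef : s + (q:ℝ) ≤ s + ((p + q - 1 : ℕ) : ℝ) := by rw [hcast1]; linarith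
      nlinarith [mul_le_mul_of_nonneg_left ihp (by linarith : (0:ℝ) ≤ s + q),
        mul_le_mul_of_nonneg_right hcoef
          (by positivity : (0:ℝ) ≤ Real.Gamma (s+1) * Real.Gamma (s + ((p+q-1:ℕ):ℝ)))]
open Real in
lemma G_le (d k s : ℕ) (hd : 2 ≤ d) :
    ((2*s+k).factorial : ℝ) / ((2*s).factorial : ℝ) *
      (Real.Gamma ((s:ℝ) + 1/2) / Real.Gamma ((s:ℝ) + (k:ℝ) + (d:ℝ)/2)) ≤
      8 * π * 2 ^ k := by
  set a : ℝ := (s:ℝ) + ((k:ℝ)+1)/2 with ha_def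
  set y : ℝ := (s:ℝ) + (k:ℝ) + (d:ℝ)/2 with hy_def
  set p : ℕ := k/2 + 1 with hp_def
  set q : ℕ := (k+1)/2 + 1 with hq_def
  have hd' : (2:ℝ) ≤ (d:ℝ) := by exact_mod_cast hd
  have hs0 : (0:ℝ) ≤ (s:ℝ) := Nat.cast_nonneg s
  have key : Real.Gamma a * Real.Gamma (a + 1/2) ≤
      8 * π * (Real.Gamma ((s:ℝ) + 1) * Real.Gamma y) := by
    have h1 : Real.Gamma a ≤ 2 * Real.sqrt π * Real.Gamma ((s:ℝ) + p) := by
      apply claimA'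
      · have : (0:ℝ) ≤ (k:ℝ) := Nat.cast_nonneg k
        rw [ha_def]; linarith
      · have : (k:ℝ) + 1 ≤ 2 * ((k/2 : ℕ) : ℝ) + 2 := by
          have : k + 1 ≤ 2 * (k/2) + 2 := by omega
          exact_mod_cast this
        rw [ha_def, hp_def]; push_cast; linarith
      · have : (1:ℝ) ≤ ((p:ℕ):ℝ) := by exact_mod_cast (by omega : 1 ≤ p)
        linarith
    have h2 : Real.Gamma (a + 1/2) ≤ 2 * Real.sqrt π * Real.Gamma ((s:ℝ) + q) := by
      apply claimA'
      · have : (0:ℝ) ≤ (k:ℝ) := Nat.cast_nonneg k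
        rw [ha_def]; linarith
      · have : (k:ℝ) + 2 ≤ 2 * (((k+1)/2 : ℕ) : ℝ) + 2 := by
          have : k + 2 ≤ 2 * ((k+1)/2) + 2 := by omega
          exact_mod_cast this
        rw [ha_def, hq_def]; push_cast; linarith
      · have : (1:ℝ) ≤ ((q:ℕ):ℝ) := by exact_mod_cast (by omega : 1 ≤ q)
        linarith
    have h3 : Real.Gamma ((s:ℝ) + p) * Real.Gamma ((s:ℝ) + q) ≤
        Real.Gamma ((s:ℝ) + 1) * Real.Gamma ((s:ℝ) + (p + q - 1 : ℕ)) :=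
      prodGamma (s:ℝ) hs0 q (by omega) p (by omega)
    have hpq : p + q - 1 = k + 1 := by omega
    have h4 : Real.Gamma ((s:ℝ) + (p + q - 1 : ℕ)) ≤ 2 * Real.Gamma y := by
      apply claimA
      · rw [hpq]; push_cast
        have : (0:ℝ) ≤ (k:ℝ) := Nat.cast_nonneg k
        linarith
      · rw [hpq, hy_def]; push_cast; linarith
    have hGp : 0 < Real.Gamma ((s:ℝ) + p) := Real.Gamma_pos_of_pos (by positivity)
    have hGq : 0 < Real.Gamma ((s:ℝ) + q) := Real.Gamma_pos_of_pos (by positivity)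
    have hG1 : 0 < Real.Gamma ((s:ℝ) + 1) := Real.Gamma_pos_of_pos (by positivity)
    have hGa : 0 < Real.Gamma a := Real.Gamma_pos_of_pos (by
      have : (0:ℝ) ≤ (k:ℝ) := Nat.cast_nonneg k
      rw [ha_def]; linarith)
    have hGb : 0 < Real.Gamma (a + 1/2) := Real.Gamma_pos_of_pos (by
      have : (0:ℝ) ≤ (k:ℝ) := Nat.cast_nonneg k
      rw [ha_def]; linarith)
    have hsq : Real.sqrt π * Real.sqrt π = π := Real.mul_self_sqrt Real.pi_pos.le
    calc Real.Gamma a * Real.Gamma (a + 1/2)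
        ≤ (2 * Real.sqrt π * Real.Gamma ((s:ℝ) + p)) * (2 * Real.sqrt π * Real.Gamma ((s:ℝ) + q)) := by
          apply mul_le_mul h1 h2 hGb.le
          positivity
      _ = 4 * (Real.sqrt π * Real.sqrt π) * (Real.Gamma ((s:ℝ) + p) * Real.Gamma ((s:ℝ) + q)) := by
          ring
      _ = 4 * π * (Real.Gamma ((s:ℝ) + p) * Real.Gamma ((s:ℝ) + q)) := by
          rw [hsq]
      _ ≤ 4 * π * (Real.Gamma ((s:ℝ) + 1) * Real.Gamma ((s:ℝ) + (p + q - 1 : ℕ))) := by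
          apply mul_le_mul_of_nonneg_left h3; positivity
      _ ≤ 4 * π * (Real.Gamma ((s:ℝ) + 1) * (2 * Real.Gamma y)) := by
          apply mul_le_mul_of_nonneg_left _ (by positivity)
          exact mul_le_mul_of_nonneg_left h4 hG1.le
      _ = 8 * π * (Real.Gamma ((s:ℝ) + 1) * Real.Gamma y) := by ring
  -- now transfer via factRatio
  have hGy : 0 < Real.Gamma y := Real.Gamma_pos_of_pos (by
    have h0 : (0:ℝ) ≤ (k:ℝ) := Nat.cast_nonneg k
    rw [hy_def]; linarith)
  have hGh : 0 < Real.Gamma ((s:ℝ) + 1/2) := Real.Gamma_pos_of_pos (by linarith)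
  have hG1 : 0 < Real.Gamma ((s:ℝ) + 1) := Real.Gamma_pos_of_pos (by linarith)
  have hfr := factRatio s k
  have hf2 : (0:ℝ) < ((2*s).factorial : ℝ) := by exact_mod_cast (2*s).factorial_pos
  rw [div_mul_div_comm, div_le_iff₀ (by positivity)]
  apply le_of_mul_le_mul_right _ hG1
  calc ((2*s+k).factorial : ℝ) * Real.Gamma ((s:ℝ) + 1/2) * Real.Gamma ((s:ℝ) + 1)
      = ((2*s+k).factorial : ℝ) * (Real.Gamma ((s:ℝ) + 1/2) * Real.Gamma ((s:ℝ) + 1)) := by ring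
    _ = 2 ^ k * ((2*s).factorial : ℝ) * (Real.Gamma a * Real.Gamma (a + 1/2)) := hfr
    _ ≤ 2 ^ k * ((2*s).factorial : ℝ) * (8 * π * (Real.Gamma ((s:ℝ) + 1) * Real.Gamma y)) := by
        apply mul_le_mul_of_nonneg_left key (by positivity)
    _ = 8 * π * 2 ^ k * (((2*s).factorial : ℝ) * Real.Gamma y) * Real.Gamma ((s:ℝ) + 1) := by ring

lemma card_adt_le (β n : ℕ) :
    (Finset.Nat.antidiagonalTuple (β+1) n).card ≤ (n+1)^β := by
  have h : (Finset.Nat.antidiagonalTuple (β+1) n).card ≤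
      (Fintype.piFinset (fun _ : Fin β => Finset.range (n+1))).card := by
    apply Finset.card_le_card_of_injOn (fun t => Fin.tail t)
    · intro t ht
      dsimp only
      rw [Finset.mem_coe, Finset.Nat.mem_antidiagonalTuple] at ht
      rw [Finset.mem_coe, Fintype.mem_piFinset]
      intro i
      rw [Finset.mem_range]
      have h1 : t i.succ ≤ ∑ j, t j := Finset.single_le_sum (fun j _ => Nat.zero_le _) (Finset.mem_univ _)
      have h2 : Fin.tail t i = t i.succ := rfl
      omega
    · intro t ht t' ht' htt
      rw [Finset.mem_coe, Finset.Nat.mem_antidiagonalTuple] at ht ht'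
      rw [Fin.sum_univ_succ] at ht ht'
      have hsum : ∑ i : Fin β, t i.succ = ∑ i : Fin β, t' i.succ := by
        apply Finset.sum_congr rfl
        intro i _
        exact congrFun htt i
      have h0 : t 0 = t' 0 := by omega
      funext i
      refine Fin.cases h0 (fun j => congrFun htt j) i
  rwa [Fintype.card_piFinset, Finset.prod_const, Finset.card_range, Finset.card_univ,
    Fintype.card_fin] at h

lemma adt_mem_single {α n : ℕ} (hα : 0 < α) :
    Pi.single (⟨0, hα⟩ : Fin α) n ∈ Finset.Nat.antidiagonalTuple α n := by
  rw [Finset.Nat.mem_antidiagonalTuple]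
  simp [Finset.sum_pi_single']

lemma powCoef_bounds {r c₁ c₂ : ℝ} (hr : 0 < r) (hc2 : 0 < c₂) {b : ℕ → ℝ}
    (hb : ∀ m : ℕ, c₂ * r ^ m ≤ b m ∧ b m ≤ c₁ * r ^ m) {α : ℕ} (hα : 1 ≤ α) (n : ℕ) :
    c₂ ^ α * r ^ n ≤ powCoef b α n ∧
      powCoef b α n ≤ ((n:ℝ)+1) ^ (α-1) * c₁ ^ α * r ^ n := by
  have hc1 : 0 < c₁ := lt_of_lt_of_le hc2 (by
    have := (hb 0).1.trans (hb 0).2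
    simpa using this)
  have hterm : ∀ t ∈ Finset.Nat.antidiagonalTuple α n,
      c₂ ^ α * r ^ n ≤ ∏ i, b (t i) ∧ (∏ i, b (t i)) ≤ c₁ ^ α * r ^ n := by
    intro t ht
    rw [Finset.Nat.mem_antidiagonalTuple] at ht
    have hlow : ∀ i : Fin α, c₂ * r ^ (t i) ≤ b (t i) := fun i => (hb (t i)).1
    have hprod : ∀ (c : ℝ), (∏ i : Fin α, c * r ^ (t i)) = c ^ α * r ^ n := by
      intro c
      rw [Finset.prod_mul_distrib, Finset.prod_const, Finset.prod_pow_eq_pow_sum, ht,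
        Finset.card_univ, Fintype.card_fin]
    constructor
    · rw [← hprod c₂]
      apply Finset.prod_le_prod (fun i _ => by positivity) (fun i _ => hlow i)
    · rw [← hprod c₁]
      apply Finset.prod_le_prod (fun i _ => le_trans (by positivity) (hlow i))
        (fun i _ => (hb (t i)).2)
  constructor
  · have hmem := adt_mem_single (n := n) hα
    have h1 := (hterm _ hmem).1
    have h2 : (∏ i, b ((Pi.single (⟨0, hα⟩ : Fin α) n : Fin α → ℕ) i)) ≤ powCoef b α n := by
      unfold powCoef
      apply Finset.single_le_sum (f := fun t => ∏ i, b (t i)) _ hmem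
      intro t ht
      exact le_trans (by positivity) (hterm t ht).1
    linarith
  · calc powCoef b α n
        ≤ (Finset.Nat.antidiagonalTuple α n).card • (c₁ ^ α * r ^ n) :=
          Finset.sum_le_card_nsmul _ _ _ (fun t ht => (hterm t ht).2)
      _ = ((Finset.Nat.antidiagonalTuple α n).card : ℝ) * (c₁ ^ α * r ^ n) := by
          rw [nsmul_eq_mul]
      _ ≤ ((n:ℝ)+1) ^ (α-1) * (c₁ ^ α * r ^ n) := by
          apply mul_le_mul_of_nonneg_right _ (by positivity)
          obtain ⟨β, rfl⟩ : ∃ β, α = β + 1 := ⟨α - 1, by omega⟩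
          have := card_adt_le β n
          calc ((Finset.Nat.antidiagonalTuple (β+1) n).card : ℝ) ≤ ((n+1)^β : ℕ) := by
                exact_mod_cast this
            _ = ((n:ℝ)+1) ^ (β+1-1) := by push_cast; ring
      _ = ((n:ℝ)+1) ^ (α-1) * c₁ ^ α * r ^ n := by ring

lemma summable_polygeom (j : ℕ) {q : ℝ} (h0 : 0 ≤ q) (h1 : q < 1) :
    Summable (fun s : ℕ => ((s:ℝ)+1) ^ j * q ^ s) := by
  have hbase : Summable (fun s : ℕ => ((s:ℝ)) ^ j * q ^ s) :=
    summable_pow_mul_geometric_of_norm_lt_one j (by rwa [Real.norm_eq_abs, abs_of_nonneg h0])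
  have hshift : Summable (fun s : ℕ => (((s+1:ℕ):ℝ)) ^ j * q ^ (s+1)) :=
    (summable_nat_add_iff 1).2 hbase
  rcases eq_or_lt_of_le h0 with rfl | hq
  · apply summable_of_ne_finset_zero (s := {0})
    intro s hs
    simp only [Finset.mem_singleton] at hs
    rw [zero_pow hs, mul_zero]
  · have := hshift.mul_left (q⁻¹)
    apply this.congr
    intro s
    push_cast
    rw [pow_succ]
    field_simp

lemma poly_le_geom (j : ℕ) : ∃ C : ℝ, 0 < C ∧ ∀ k : ℕ, ((k:ℝ)+1) ^ j ≤ C * 2 ^ k := by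
  have hsum : Summable (fun s : ℕ => ((s:ℝ)+1) ^ j * (1/2 : ℝ) ^ s) :=
    summable_polygeom j (by norm_num) (by norm_num)
  refine ⟨∑' s : ℕ, ((s:ℝ)+1) ^ j * (1/2 : ℝ) ^ s, ?_, ?_⟩
  · have h0 : (0:ℝ) < ((0:ℕ):ℝ)+1 := by norm_num
    have := Summable.le_tsum hsum 0 (fun s _ => by positivity)
    simp only [Nat.cast_zero, zero_add, one_pow, pow_zero, mul_one] at this
    norm_num at this
    linarith
  · intro k
    have h1 : ((k:ℝ)+1) ^ j * (1/2 : ℝ) ^ k ≤ ∑' s : ℕ, ((s:ℝ)+1) ^ j * (1/2 : ℝ) ^ s :=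
      Summable.le_tsum hsum k (fun s _ => by positivity)
    have h2 : (0:ℝ) < (2:ℝ) ^ k := by positivity
    calc ((k:ℝ)+1) ^ j = (((k:ℝ)+1) ^ j * (1/2:ℝ) ^ k) * 2 ^ k := by
          rw [div_pow, one_pow]
          field_simp
      _ ≤ (∑' s : ℕ, ((s:ℝ)+1) ^ j * (1/2:ℝ) ^ s) * 2 ^ k :=
          mul_le_mul_of_nonneg_right h1 h2.le

lemma fact_le_fact_mul_pow (j : ℕ) : ∀ k : ℕ, (k + j).factorial ≤ k.factorial * (k+j) ^ j := by
  induction j with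
  | zero => intro k; simp
  | succ j ih =>
    intro k
    calc (k + (j+1)).factorial = (k+j+1) * (k+j).factorial := by
          rw [show k + (j+1) = (k+j)+1 by omega, Nat.factorial_succ]
      _ ≤ (k+j+1) * (k.factorial * (k+j) ^ j) := Nat.mul_le_mul_left _ (ih k)
      _ ≤ (k+j+1) * (k.factorial * (k+j+1) ^ j) := by
          apply Nat.mul_le_mul_left
          apply Nat.mul_le_mul_left
          exact Nat.pow_le_pow_left (by omega) j
      _ = k.factorial * (k+(j+1)) ^ (j+1) := by
          rw [show k + (j+1) = k+j+1 by omega]; ring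

/-- Under the geometric bounds `c₂ r^m ≤ b_m ≤ c₁ r^m`, for every `α ≥ 1`
the series defining `λ_{m,α}` converges for every `m`, and there are constants
`C₁, C₂ > 0` depending only on `α, d, r, c₁, c₂` with
`C₂ (r/4)^m ≤ λ_{m,α} ≤ C₁ (m+1)^{α-1} r^m` for all `m`. -/
theorem stmt_2 (d : ℕ) (hd : 2 ≤ d) (r c₁ c₂ : ℝ)
    (hr0 : 0 < r) (hr1 : r < 1) (hc2 : 0 < c₂) (hcc : c₂ ≤ c₁)
    (α : ℕ) (hα : 1 ≤ α) :
    ∃ C₁ C₂ : ℝ, 0 < C₁ ∧ 0 < C₂ ∧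
      ∀ b : ℕ → ℝ,
        (∀ x ∈ Set.Icc (-1 : ℝ) 1, Summable fun m : ℕ => b m * x ^ m) →
        (∀ m : ℕ, c₂ * r ^ m ≤ b m ∧ b m ≤ c₁ * r ^ m) →
        ∀ m : ℕ,
          (Summable fun s : ℕ => powCoef b α (2 * s + m) *
              (((2 * s + m).factorial : ℝ) / ((2 * s).factorial : ℝ)) *
              (Real.Gamma ((s : ℝ) + 1 / 2) / Real.Gamma ((s : ℝ) + (m : ℝ) + (d : ℝ) / 2))) ∧
          C₂ * (r / 4) ^ m ≤ lamCoef d b m α ∧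
          lamCoef d b m α ≤ C₁ * ((m : ℝ) + 1) ^ (α - 1) * r ^ m := by
  have hc1 : 0 < c₁ := lt_of_lt_of_le hc2 hcc
  have hd' : (2:ℝ) ≤ (d:ℝ) := by exact_mod_cast hd
  have hpi := Real.pi_pos
  have hspi : 0 < Real.sqrt Real.pi := Real.sqrt_pos.2 hpi
  -- the prefactor
  set A : ℝ := unitSphereArea (d - 1) * Real.Gamma (((d : ℝ) - 1) / 2) with hA_def
  have hA : 0 < A := by
    apply mul_pos
    · unfold unitSphereArea
      apply div_pos
      · positivity
      · apply Real.Gamma_pos_of_pos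
        have h1 : (1:ℝ) ≤ ((d-1:ℕ):ℝ) := by exact_mod_cast (by omega : 1 ≤ d - 1)
        linarith
    · exact Real.Gamma_pos_of_pos (by linarith)
  -- geometric data
  have hr2 : r^2 < 1 := by nlinarith
  have hr2' : (0:ℝ) ≤ r^2 := by positivity
  have hSsum : Summable (fun s : ℕ => ((s:ℝ)+1) ^ (α-1) * (r^2) ^ s) :=
    summable_polygeom (α-1) hr2' hr2
  set S : ℝ := ∑' s : ℕ, ((s:ℝ)+1) ^ (α-1) * (r^2) ^ s with hS_def
  have hS1 : (1:ℝ) ≤ S := by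
    have := Summable.le_tsum hSsum 0 (fun s _ => by positivity)
    simpa using this
  obtain ⟨Cp, hCp, hCpk⟩ := poly_le_geom (d-1)
  refine ⟨A * c₁^α * (8*Real.pi) * 2^(α-1) * S / 2,
    A * c₂^α * Real.sqrt Real.pi / (4 * (d:ℝ)^(d-1) * Cp), by positivity, by positivity,
    ?_⟩
  intro b _ hb m
  -- positivity of Gamma values appearing in the terms
  have hGhalf : ∀ s : ℕ, 0 < Real.Gamma ((s:ℝ) + 1/2) :=
    fun s => Real.Gamma_pos_of_pos (by positivity)
  have hGden : ∀ s : ℕ, 0 < Real.Gamma ((s:ℝ) + (m:ℝ) + (d:ℝ)/2) :=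
    fun s => Real.Gamma_pos_of_pos (by positivity)
  have hPnn : ∀ n : ℕ, 0 ≤ powCoef b α n :=
    fun n => le_trans (by positivity) (powCoef_bounds hr0 hc2 hb hα n).1
  have hT_nonneg : ∀ s : ℕ, 0 ≤ powCoef b α (2 * s + m) *
      (((2 * s + m).factorial : ℝ) / ((2 * s).factorial : ℝ)) *
      (Real.Gamma ((s : ℝ) + 1 / 2) / Real.Gamma ((s : ℝ) + (m : ℝ) + (d : ℝ) / 2)) := by
    intro s
    apply mul_nonneg (mul_nonneg (hPnn _) (by positivity))
    exact div_nonneg (hGhalf s).le (hGden s).le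
  -- the pointwise upper bound
  set K : ℝ := c₁^α * (8*Real.pi) * 2^m * ((m:ℝ)+1)^(α-1) * r^m * 2^(α-1) with hK_def
  have hstep : ∀ s : ℕ, powCoef b α (2 * s + m) *
      (((2 * s + m).factorial : ℝ) / ((2 * s).factorial : ℝ)) *
      (Real.Gamma ((s : ℝ) + 1 / 2) / Real.Gamma ((s : ℝ) + (m : ℝ) + (d : ℝ) / 2)) ≤
      K * (((s:ℝ)+1) ^ (α-1) * (r^2) ^ s) := by
    intro s
    have hP := (powCoef_bounds hr0 hc2 hb hα (2*s+m)).2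
    have hG := G_le d m s hd
    have hGnn : 0 ≤ (((2 * s + m).factorial : ℝ) / ((2 * s).factorial : ℝ)) *
        (Real.Gamma ((s : ℝ) + 1 / 2) / Real.Gamma ((s : ℝ) + (m : ℝ) + (d : ℝ) / 2)) := by
      apply mul_nonneg (by positivity)
      exact div_nonneg (hGhalf s).le (hGden s).le
    have e1 : ((2*s+m:ℕ):ℝ) + 1 ≤ 2*((s:ℝ)+1)*((m:ℝ)+1) := by
      push_cast
      nlinarith [Nat.cast_nonneg (α := ℝ) s, Nat.cast_nonneg (α := ℝ) m]
    have e2 : (((2*s+m:ℕ):ℝ)+1)^(α-1) ≤ (2*((s:ℝ)+1)*((m:ℝ)+1))^(α-1) :=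
      pow_le_pow_left₀ (by positivity) e1 _
    have e4 : r^(2*s+m) = (r^2) ^ s * r^m := by rw [pow_add, pow_mul]
    calc powCoef b α (2 * s + m) *
        (((2 * s + m).factorial : ℝ) / ((2 * s).factorial : ℝ)) *
        (Real.Gamma ((s : ℝ) + 1 / 2) / Real.Gamma ((s : ℝ) + (m : ℝ) + (d : ℝ) / 2))
        = powCoef b α (2 * s + m) *
          ((((2 * s + m).factorial : ℝ) / ((2 * s).factorial : ℝ)) *
          (Real.Gamma ((s : ℝ) + 1 / 2) / Real.Gamma ((s : ℝ) + (m : ℝ) + (d : ℝ) / 2))) := by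
          ring
      _ ≤ (((2*s+m:ℕ):ℝ)+1)^(α-1) * c₁^α * r^(2*s+m) * (8 * Real.pi * 2^m) :=
          mul_le_mul hP hG hGnn (by positivity)
      _ ≤ (2*((s:ℝ)+1)*((m:ℝ)+1))^(α-1) * c₁^α * r^(2*s+m) * (8 * Real.pi * 2^m) := by
          apply mul_le_mul_of_nonneg_right _ (by positivity)
          apply mul_le_mul_of_nonneg_right _ (by positivity)
          exact mul_le_mul_of_nonneg_right e2 (by positivity)
      _ = K * (((s:ℝ)+1) ^ (α-1) * (r^2) ^ s) := by
          rw [e4, hK_def, mul_pow, mul_pow]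
          ring
  have hU_sum : Summable (fun s : ℕ => K * (((s:ℝ)+1) ^ (α-1) * (r^2) ^ s)) :=
    hSsum.mul_left K
  have hTsum : Summable (fun s : ℕ => powCoef b α (2 * s + m) *
      (((2 * s + m).factorial : ℝ) / ((2 * s).factorial : ℝ)) *
      (Real.Gamma ((s : ℝ) + 1 / 2) / Real.Gamma ((s : ℝ) + (m : ℝ) + (d : ℝ) / 2))) :=
    Summable.of_nonneg_of_le hT_nonneg hstep hU_sum
  have hlam : lamCoef d b m α = A / 2 ^ (m+1) *
      ∑' s : ℕ, powCoef b α (2 * s + m) *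
        (((2 * s + m).factorial : ℝ) / ((2 * s).factorial : ℝ)) *
        (Real.Gamma ((s : ℝ) + 1 / 2) / Real.Gamma ((s : ℝ) + (m : ℝ) + (d : ℝ) / 2)) := rfl
  refine ⟨hTsum, ?_, ?_⟩
  · -- lower bound
    have hGy : 0 < Real.Gamma ((m:ℝ) + (d:ℝ)/2) := Real.Gamma_pos_of_pos (by positivity)
    set B : ℝ := 2 * ((m.factorial:ℝ) * ((d:ℝ)^(d-1) * (Cp * 2^m))) with hB_def
    have hBpos : 0 < B := by positivity
    have hGyB : Real.Gamma ((m:ℝ) + (d:ℝ)/2) ≤ B := by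
      have h1 : Real.Gamma ((m:ℝ) + (d:ℝ)/2) ≤ 2 * Real.Gamma ((m:ℝ) + (d:ℝ)) := by
        apply claimA
        · have : (0:ℝ) ≤ (m:ℝ) := Nat.cast_nonneg m
          linarith
        · linarith [Nat.cast_nonneg (α := ℝ) m]
      have h2 : Real.Gamma ((m:ℝ) + (d:ℝ)) = (((m+d-1).factorial : ℕ) : ℝ) := by
        rw [show (m:ℝ)+(d:ℝ) = (((m+d-1:ℕ)):ℝ)+1 by
          push_cast [Nat.cast_sub (by omega : 1 ≤ m + d)]; ring]
        exact Real.Gamma_nat_eq_factorial _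
      have h3 : (m+d-1).factorial ≤ m.factorial * (m+d-1)^(d-1) := by
        have := fact_le_fact_mul_pow (d-1) m
        rwa [show m + (d-1) = m+d-1 by omega] at this
      have h4 : (m+d-1)^(d-1) ≤ (d*(m+1))^(d-1) := by
        apply Nat.pow_le_pow_left
        have hm : m ≤ d*m := Nat.le_mul_of_pos_left m (by omega)
        have hdm : d*(m+1) = d*m+d := by ring
        omega
      have h5 : (((m+d-1).factorial : ℕ) : ℝ) ≤ (m.factorial:ℝ) * ((d:ℝ)*((m:ℝ)+1))^(d-1) := by
        have hn : (m+d-1).factorial ≤ m.factorial * (d*(m+1))^(d-1) :=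
          h3.trans (Nat.mul_le_mul_left _ h4)
        calc (((m+d-1).factorial : ℕ) : ℝ) ≤ ((m.factorial * (d*(m+1))^(d-1) : ℕ) : ℝ) := by
              exact_mod_cast hn
          _ = (m.factorial:ℝ) * ((d:ℝ)*((m:ℝ)+1))^(d-1) := by push_cast; ring
      have h6 : ((m:ℝ)+1)^(d-1) ≤ Cp * 2^m := hCpk m
      calc Real.Gamma ((m:ℝ) + (d:ℝ)/2) ≤ 2 * Real.Gamma ((m:ℝ) + (d:ℝ)) := h1
        _ = 2 * (((m+d-1).factorial : ℕ) : ℝ) := by rw [h2]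
        _ ≤ 2 * ((m.factorial:ℝ) * ((d:ℝ)*((m:ℝ)+1))^(d-1)) := by linarith
        _ = 2 * ((m.factorial:ℝ) * ((d:ℝ)^(d-1) * ((m:ℝ)+1)^(d-1))) := by
            rw [mul_pow]
        _ ≤ B := by
            rw [hB_def]
            have hfm : (0:ℝ) < (m.factorial:ℝ) := by exact_mod_cast m.factorial_pos
            have hdp : (0:ℝ) < (d:ℝ)^(d-1) := by positivity
            nlinarith [mul_le_mul_of_nonneg_left h6 (mul_pos hfm hdp).le]
    have hT0 : powCoef b α m * ((m.factorial:ℝ) * (Real.sqrt Real.pi / B)) ≤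
        powCoef b α (2 * 0 + m) *
        (((2 * 0 + m).factorial : ℝ) / (((2 * 0 : ℕ)).factorial : ℝ)) *
        (Real.Gamma (((0:ℕ) : ℝ) + 1 / 2) /
          Real.Gamma (((0:ℕ) : ℝ) + (m : ℝ) + (d : ℝ) / 2)) := by
      have he : powCoef b α (2 * 0 + m) *
          (((2 * 0 + m).factorial : ℝ) / (((2 * 0 : ℕ)).factorial : ℝ)) *
          (Real.Gamma (((0:ℕ) : ℝ) + 1 / 2) /
            Real.Gamma (((0:ℕ) : ℝ) + (m : ℝ) + (d : ℝ) / 2)) =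
          powCoef b α m * ((m.factorial:ℝ) *
            (Real.sqrt Real.pi / Real.Gamma ((m:ℝ) + (d:ℝ)/2))) := by
        norm_num [Real.Gamma_one_half_eq]
        ring
      rw [he]
      apply mul_le_mul_of_nonneg_left _ (hPnn m)
      apply mul_le_mul_of_nonneg_left _ (by positivity)
      exact div_le_div_of_nonneg_left hspi.le hGy hGyB
    have hT0' : c₂^α * r^m * ((m.factorial:ℝ) * (Real.sqrt Real.pi / B)) ≤
        powCoef b α (2 * 0 + m) *
        (((2 * 0 + m).factorial : ℝ) / (((2 * 0 : ℕ)).factorial : ℝ)) *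
        (Real.Gamma (((0:ℕ) : ℝ) + 1 / 2) /
          Real.Gamma (((0:ℕ) : ℝ) + (m : ℝ) + (d : ℝ) / 2)) := by
      refine le_trans ?_ hT0
      apply mul_le_mul_of_nonneg_right (powCoef_bounds hr0 hc2 hb hα m).1 (by positivity)
    have htsum_ge := Summable.le_tsum hTsum 0 (fun s _ => hT_nonneg s)
    rw [hlam]
    have hstep2 : A / 2 ^ (m+1) * (c₂^α * r^m * ((m.factorial:ℝ) * (Real.sqrt Real.pi / B))) ≤
        A / 2 ^ (m+1) * ∑' s : ℕ, powCoef b α (2 * s + m) *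
          (((2 * s + m).factorial : ℝ) / ((2 * s).factorial : ℝ)) *
          (Real.Gamma ((s : ℝ) + 1 / 2) / Real.Gamma ((s : ℝ) + (m : ℝ) + (d : ℝ) / 2)) := by
      apply mul_le_mul_of_nonneg_left _ (by positivity)
      exact le_trans hT0' htsum_ge
    refine le_trans (le_of_eq ?_) hstep2
    -- algebraic identity for the constants
    rw [hB_def]
    have hfm : ((m.factorial:ℕ):ℝ) ≠ 0 := by
      exact_mod_cast m.factorial_ne_zero
    have h4m : (4:ℝ)^m = 2^m * 2^m := by rw [← mul_pow]; norm_num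
    rw [div_pow, h4m, pow_succ]
    field_simp
    ring
  · -- upper bound
    rw [hlam]
    have h1 : (∑' s : ℕ, powCoef b α (2 * s + m) *
        (((2 * s + m).factorial : ℝ) / ((2 * s).factorial : ℝ)) *
        (Real.Gamma ((s : ℝ) + 1 / 2) / Real.Gamma ((s : ℝ) + (m : ℝ) + (d : ℝ) / 2))) ≤
        K * S := by
      rw [hS_def, ← tsum_mul_left]
      exact Summable.tsum_le_tsum hstep hTsum hU_sum
    calc A / 2 ^ (m+1) * ∑' s : ℕ, powCoef b α (2 * s + m) *
        (((2 * s + m).factorial : ℝ) / ((2 * s).factorial : ℝ)) *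
        (Real.Gamma ((s : ℝ) + 1 / 2) / Real.Gamma ((s : ℝ) + (m : ℝ) + (d : ℝ) / 2))
        ≤ A / 2 ^ (m+1) * (K * S) := by
          apply mul_le_mul_of_nonneg_left h1 (by positivity)
      _ = A * c₁^α * (8*Real.pi) * 2^(α-1) * S / 2 * ((m:ℝ)+1)^(α-1) * r^m := by
          rw [hK_def, pow_succ]
          field_simp
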